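/- Let R be a Noetherian integral domain, I \subseteq R an ideal, t \geq 0 rational, and x \in R. Then x \in I_t (i.e., x^b \in \overline{I^a} where t = a/b) if and only if for every valuation v (possibly of higher rank or nondiscrete) of Frac(R) that is nonnegative on R, there exists y \in I with v(x) \geq t\, v(y). -/

import Mathlib

/-- Integral closure of an ideal: elements satisfying an equation of integral dependence. -/
def idealIntClosure {R : Type} [CommRing R] (I : Ideal R) : Set R :=
  {x | ∃ n : ℕ, 0 < n ∧ ∃ c : ℕ → R, (∀ i, 1 ≤ i → i ≤ n → c i ∈ I ^ i) ∧
    x ^ n + ∑ i ∈ Finset.Icc 1 n, c i * x ^ (n - i) = 0}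

open Finset

section idealAux

variable {R : Type} [CommRing R]


lemma aux_mem_sum {ι : Type*} (s : Finset ι) (Q : ι → Ideal R) {z : R}
    (hz : z ∈ ∑ i ∈ s, Q i) : ∃ c : ι → R, (∀ i, c i ∈ Q i) ∧ z = ∑ i ∈ s, c i := by
  classical
  induction s using Finset.induction_on generalizing z with
  | empty =>
    refine ⟨0, fun i => (Q i).zero_mem, ?_⟩
    simpa using (by simpa using hz : z ∈ (⊥ : Ideal R))
  | @insert a s ha ih =>
    rw [Finset.sum_insert ha, Submodule.add_eq_sup, Submodule.mem_sup] at hz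
    obtain ⟨u, hu, w, hw, rfl⟩ := hz
    obtain ⟨c, hc, rfl⟩ := ih hw
    refine ⟨Function.update c a u, fun i => ?_, ?_⟩
    · rcases eq_or_ne i a with rfl | hne
      · simpa using hu
      · simpa [Function.update_of_ne hne] using hc i
    · rw [Finset.sum_insert ha, Function.update_self]
      congr 1
      exact (Finset.sum_congr rfl fun i hi =>
        Function.update_of_ne (ne_of_mem_of_not_mem hi ha) u c).symm

lemma aux_sum_le {ι : Type*} (s : Finset ι) (Q : ι → Ideal R) (T : Ideal R)
    (h : ∀ i ∈ s, Q i ≤ T) : ∑ i ∈ s, Q i ≤ T := by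
  classical
  induction s using Finset.induction_on with
  | empty => simp
  | @insert a s ha ih =>
    rw [Finset.sum_insert ha, Submodule.add_eq_sup]
    exact sup_le (h a (Finset.mem_insert_self a s))
      (ih fun i hi => h i (Finset.mem_insert_of_mem hi))

lemma aux_le_sum {ι : Type*} (s : Finset ι) (Q : ι → Ideal R) {i : ι} (hi : i ∈ s) :
    Q i ≤ ∑ j ∈ s, Q j := by
  classical
  induction s using Finset.induction_on with
  | empty => simp at hi
  | @insert a s ha ih =>
    rw [Finset.sum_insert ha, Submodule.add_eq_sup]
    rcases Finset.mem_insert.mp hi with rfl | hi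
    · exact le_sup_left
    · exact (ih hi).trans le_sup_right

lemma aux_key1 (J : Ideal R) (X : R) (N : ℕ) :
    (J ⊔ Ideal.span {X}) ^ N ≤ ∑ i ∈ range (N + 1), J ^ i * Ideal.span {X ^ (N - i)} := by
  induction N with
  | zero => simp [Ideal.span_singleton_one]
  | succ N ih =>
    rw [pow_succ]
    calc (J ⊔ Ideal.span {X}) ^ N * (J ⊔ Ideal.span {X})
        ≤ (∑ i ∈ range (N + 1), J ^ i * Ideal.span {X ^ (N - i)}) * (J ⊔ Ideal.span {X}) :=
          Ideal.mul_mono_left ih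
      _ ≤ _ := by
          rw [Ideal.mul_sup]
          apply sup_le
          · rw [Finset.sum_mul]
            apply aux_sum_le
            intro i hi
            have hi' : i < N + 1 := Finset.mem_range.mp hi
            have h1 : N + 1 - (i + 1) = N - i := by omega
            have : J ^ i * Ideal.span {X ^ (N - i)} * J
                = J ^ (i + 1) * Ideal.span {X ^ (N + 1 - (i + 1))} := by
              rw [h1, mul_right_comm, ← pow_succ]
            rw [this]
            exact aux_le_sum (range (N + 1 + 1))
              (fun j => J ^ j * Ideal.span {X ^ (N + 1 - j)}) (i := i + 1)
              (Finset.mem_range.mpr (by omega))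
          · rw [Finset.sum_mul]
            apply aux_sum_le
            intro i hi
            have hi' : i < N + 1 := Finset.mem_range.mp hi
            have h1 : N - i + 1 = N + 1 - i := by omega
            have : J ^ i * Ideal.span {X ^ (N - i)} * Ideal.span {X}
                = J ^ i * Ideal.span {X ^ (N + 1 - i)} := by
              rw [mul_assoc, Ideal.span_singleton_mul_span_singleton, ← pow_succ, h1]
            rw [this]
            exact aux_le_sum (range (N + 1 + 1))
              (fun j => J ^ j * Ideal.span {X ^ (N + 1 - j)}) (i := i)
              (Finset.mem_range.mpr (by omega))
lemma aux_mem_closure_of_pow (J : Ideal R) (X : R) (N : ℕ)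
    (h : X ^ (N + 1) ∈ J * (J ⊔ Ideal.span {X}) ^ N) : X ∈ idealIntClosure J := by
  classical
  have h2 : X ^ (N + 1) ∈ ∑ i ∈ range (N + 1), J ^ (i + 1) * Ideal.span {X ^ (N - i)} := by
    refine SetLike.le_def.mp ?_ h
    calc J * (J ⊔ Ideal.span {X}) ^ N
        ≤ J * ∑ i ∈ range (N + 1), J ^ i * Ideal.span {X ^ (N - i)} :=
          Ideal.mul_mono_right (aux_key1 J X N)
      _ = ∑ i ∈ range (N + 1), J ^ (i + 1) * Ideal.span {X ^ (N - i)} := by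
          rw [Finset.mul_sum]
          exact Finset.sum_congr rfl fun i _ => by rw [← mul_assoc, ← pow_succ']
  obtain ⟨c, hc, hXc⟩ := aux_mem_sum _ _ h2
  choose d hd hdX using fun i => Ideal.mem_mul_span_singleton.mp (hc i)
  refine ⟨N + 1, Nat.succ_pos N, fun i => -d (i - 1), fun i h1 _ => neg_mem ?_, ?_⟩
  · have e : i - 1 + 1 = i := by omega
    exact e ▸ hd (i - 1)
  · have e1 : ∑ i ∈ Finset.Icc 1 (N + 1), -d (i - 1) * X ^ (N + 1 - i) = -(X ^ (N + 1)) := by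
      rw [← Finset.Ico_add_one_right_eq_Icc, Finset.sum_Ico_eq_sum_range]
      have e2 : ∀ i ∈ range (N + 1 + 1 - 1), -d (1 + i - 1) * X ^ (N + 1 - (1 + i))
          = -(d i * X ^ (N - i)) := by
        intro i _
        have e3 : 1 + i - 1 = i := by omega
        have e4 : N + 1 - (1 + i) = N - i := by omega
        rw [e3, e4, neg_mul]
      rw [Finset.sum_congr rfl e2, Finset.sum_neg_distrib,
        Finset.sum_congr rfl fun i _ => hdX i]
      show -(∑ i ∈ range (N + 1), c i) = _
      rw [← hXc]
    show X ^ (N + 1) + ∑ i ∈ Finset.Icc 1 (N + 1), -d (i - 1) * X ^ (N + 1 - i) = 0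
    rw [e1, add_neg_cancel]

lemma aux_bump (J : Ideal R) (X : R) (k N : ℕ) {m : R}
    (hm : m ∈ (J ⊔ Ideal.span {X}) ^ N) : X ^ k * m ∈ (J ⊔ Ideal.span {X}) ^ (k + N) := by
  have hXM : X ∈ J ⊔ Ideal.span {X} := le_sup_right (a := J) (Ideal.subset_span rfl)
  rw [pow_add]
  exact Ideal.mul_mem_mul (Ideal.pow_mem_pow hXM k) hm

end idealAux

variable {K : Type} [Field K] (B : ValuationSubring K)

/-- The additive value group associated to a valuation subring. -/
abbrev auxGamma : Type := Additive ((B.ValueGroup)ˣ)ᵒᵈ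

noncomputable def auxG (t : B.ValueGroup) : WithTop (auxGamma B) :=
  if h : t = 0 then ⊤
  else ((Additive.ofMul (OrderDual.toDual (Units.mk0 t h)) : auxGamma B) : WithTop (auxGamma B))

lemma auxG_zero : auxG B 0 = ⊤ := dif_pos rfl

lemma auxG_one : auxG B 1 = 0 := by
  rw [auxG, dif_neg one_ne_zero]
  norm_cast
  rw [Units.mk0_one]
  rfl

lemma auxG_mul (t u : B.ValueGroup) : auxG B (t * u) = auxG B t + auxG B u := by
  rcases eq_or_ne t 0 with rfl | ht
  · rw [zero_mul, auxG_zero, top_add]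
  rcases eq_or_ne u 0 with rfl | hu
  · rw [mul_zero, auxG_zero, add_top]
  rw [auxG, auxG, auxG, dif_neg (mul_ne_zero ht hu), dif_neg ht, dif_neg hu]
  rw [← WithTop.coe_add]
  congr 1
  rw [← ofMul_mul]
  exact congrArg Additive.ofMul (congrArg OrderDual.toDual (Units.ext rfl))

lemma auxG_le_iff (t u : B.ValueGroup) : auxG B u ≤ auxG B t ↔ t ≤ u := by
  rcases eq_or_ne u 0 with rfl | hu
  · simp only [auxG_zero, top_le_iff]
    constructor
    · intro h
      by_contra ht
      rw [le_zero_iff] at ht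
      rw [auxG] at h
      rw [dif_neg (by tauto)] at h
      exact (WithTop.coe_ne_top h).elim
    · intro h
      rw [le_zero_iff] at h
      rw [h, auxG_zero]
  rcases eq_or_ne t 0 with rfl | ht
  · simp [auxG_zero, le_top, zero_le']
  rw [auxG, auxG, dif_neg ht, dif_neg hu, WithTop.coe_le_coe]
  show Additive.ofMul _ ≤ Additive.ofMul _ ↔ _
  rw [Additive.ofMul_le]
  show OrderDual.toDual _ ≤ OrderDual.toDual _ ↔ _
  rw [OrderDual.toDual_le_toDual]
  exact Units.val_le_val.symm

lemma auxG_lt_iff (t u : B.ValueGroup) : auxG B u < auxG B t ↔ t < u := by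
  rw [lt_iff_le_not_ge, lt_iff_le_not_ge, auxG_le_iff, auxG_le_iff]

section nsmulLemmas
variable {Γ : Type*} [AddCommGroup Γ] [LinearOrder Γ] [IsOrderedAddMonoid Γ]

lemma aux_nsmul_top {n : ℕ} (hn : n ≠ 0) : n • (⊤ : WithTop Γ) = ⊤ := by
  cases n with
  | zero => exact absurd rfl hn
  | succ k => rw [succ_nsmul, add_top]

lemma aux_nsmul_cancel {i : ℕ} (hi : i ≠ 0) {u w : WithTop Γ} (h : i • u ≤ i • w) : u ≤ w := by
  cases w with
  | top => exact le_top
  | coe w' =>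
    cases u with
    | top =>
      rw [aux_nsmul_top hi, ← WithTop.coe_nsmul, top_le_iff] at h
      exact absurd h (WithTop.coe_ne_top)
    | coe u' =>
      rw [← WithTop.coe_nsmul, ← WithTop.coe_nsmul, WithTop.coe_le_coe] at h
      rw [WithTop.coe_le_coe]
      exact ((_root_.nsmul_right_strictMono hi).le_iff_le).mp h
end nsmulLemmas

lemma auxG_pow (t : B.ValueGroup) {n : ℕ} (hn : n ≠ 0) : auxG B (t ^ n) = n • auxG B t := by
  rcases eq_or_ne t 0 with rfl | ht
  · rw [zero_pow hn, auxG_zero, aux_nsmul_top hn]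
  · rw [auxG, auxG, dif_neg (pow_ne_zero n ht), dif_neg ht, ← WithTop.coe_nsmul]
    congr 1
    rw [← ofMul_pow]
    exact congrArg Additive.ofMul (congrArg OrderDual.toDual (Units.ext rfl))

/-- The additive valuation attached to a valuation subring. -/
noncomputable def auxAddVal : AddValuation K (WithTop (auxGamma B)) :=
  AddValuation.of (fun z => auxG B (B.valuation z))
    (by show auxG B (B.valuation 0) = ⊤; rw [Valuation.map_zero, auxG_zero])
    (by show auxG B (B.valuation 1) = 0; rw [Valuation.map_one, auxG_one])
    (fun x y => by
      rcases le_total (B.valuation x) (B.valuation y) with h | h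
      · refine min_le_of_right_le ?_
        exact (auxG_le_iff B _ _).mpr ((B.valuation.map_add x y).trans (max_le h le_rfl))
      · refine min_le_of_left_le ?_
        exact (auxG_le_iff B _ _).mpr ((B.valuation.map_add x y).trans (max_le le_rfl h)))
    (fun x y => by
      show auxG B (B.valuation (x * y)) = auxG B (B.valuation x) + auxG B (B.valuation y)
      rw [Valuation.map_mul, auxG_mul])

lemma auxAddVal_apply (z : K) : auxAddVal B z = auxG B (B.valuation z) := rfl

section forwardAux

variable {R : Type} [CommRing R] {K : Type} [CommRing K] [Algebra R K]
  {Γ : Type} [AddCommGroup Γ] [LinearOrder Γ] [IsOrderedAddMonoid Γ]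
  (v : AddValuation K (WithTop Γ))

lemma aux_min [IsNoetherianRing R] (hv : ∀ r : R, 0 ≤ v (algebraMap R K r)) (I : Ideal R) :
    ∃ y₀ ∈ I, ∀ z ∈ I, v (algebraMap R K y₀) ≤ v (algebraMap R K z) := by
  classical
  obtain ⟨S, hS⟩ := IsNoetherian.noetherian I
  set f := algebraMap R K
  have hS' : Submodule.span R (insert (0 : R) ↑S) = I := by
    rw [Submodule.span_insert_zero, hS]
  obtain ⟨y₀, hy₀S, hmin⟩ := Finset.exists_min_image (insert (0 : R) S) (fun z => v (f z))
    ⟨0, Finset.mem_insert_self _ _⟩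
  have hy₀S' : (y₀ : R) ∈ (insert (0:R) ↑S : Set R) := by
    simpa using hy₀S
  refine ⟨y₀, hS' ▸ Submodule.subset_span hy₀S', fun z hz => ?_⟩
  rw [← hS'] at hz
  induction hz using Submodule.span_induction with
  | mem w hw => exact hmin w (by simpa using hw)
  | zero =>
    rw [map_zero, AddValuation.map_zero]
    exact le_top
  | add w₁ w₂ _ _ h1 h2 =>
    rw [map_add]
    exact v.map_le_add h1 h2
  | smul r w _ hw =>
    rw [smul_eq_mul, map_mul, AddValuation.map_mul]
    exact hw.trans (le_add_of_nonneg_left (hv r))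

lemma aux_pow_mem (hv : ∀ r : R, 0 ≤ v (algebraMap R K r)) {I : Ideal R} {y₀ : R}
    (hmin : ∀ z ∈ I, v (algebraMap R K y₀) ≤ v (algebraMap R K z)) :
    ∀ m : ℕ, ∀ z ∈ I ^ m, m • v (algebraMap R K y₀) ≤ v (algebraMap R K z) := by
  set f := algebraMap R K
  intro m
  induction m with
  | zero => intro z _; rw [zero_nsmul]; exact hv z
  | succ m ih =>
    intro z hz
    rw [pow_succ] at hz
    refine Submodule.mul_induction_on hz (fun u hu w hw => ?_) (fun w₁ w₂ h1 h2 => ?_)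
    · rw [map_mul, AddValuation.map_mul, succ_nsmul]
      exact add_le_add (ih u hu) (hmin w hw)
    · rw [map_add]
      exact v.map_le_add h1 h2

end forwardAux

lemma aux_clear {R K : Type} [CommRing R] [Field K] [Algebra R K] (J : Ideal R) (X : R)
    (hfX : algebraMap R K X ≠ 0) {z : K}
    (hz : z ∈ Algebra.adjoin R {w : K | ∃ j ∈ J, w = algebraMap R K j / algebraMap R K X}) :
    ∃ (N : ℕ) (m : R), m ∈ (J ⊔ Ideal.span {X}) ^ N ∧
      (algebraMap R K X) ^ N * z = algebraMap R K m := by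
  set f := algebraMap R K
  set M := J ⊔ Ideal.span {X} with hM
  have hXM : X ∈ M := le_sup_right (a := J) (Ideal.subset_span rfl)
  have bump : ∀ (k N : ℕ) (m : R), m ∈ M ^ N → X ^ k * m ∈ M ^ (k + N) := by
    intro k N m hm
    rw [pow_add]
    exact Ideal.mul_mem_mul (Ideal.pow_mem_pow hXM k) hm
  induction hz using Algebra.adjoin_induction with
  | mem w hw =>
    obtain ⟨j, hj, rfl⟩ := hw
    refine ⟨1, j, by simpa using Ideal.mem_sup_left hj, ?_⟩
    rw [pow_one]
    exact mul_div_cancel₀ _ hfX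
  | algebraMap r => exact ⟨0, r, by simp, by simp; rfl⟩
  | add z₁ z₂ _ _ ih1 ih2 =>
    obtain ⟨N₁, m₁, hm₁, he₁⟩ := ih1
    obtain ⟨N₂, m₂, hm₂, he₂⟩ := ih2
    refine ⟨N₂ + N₁, X ^ N₂ * m₁ + X ^ N₁ * m₂, add_mem (bump N₂ N₁ m₁ hm₁)
      (by rw [add_comm N₂ N₁]; exact bump N₁ N₂ m₂ hm₂), ?_⟩
    rw [mul_add, map_add, map_mul, map_mul, map_pow, map_pow, pow_add]
    rw [mul_assoc, he₁, mul_comm (f X ^ N₂) (f X ^ N₁), mul_assoc, he₂]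
  | mul z₁ z₂ _ _ ih1 ih2 =>
    obtain ⟨N₁, m₁, hm₁, he₁⟩ := ih1
    obtain ⟨N₂, m₂, hm₂, he₂⟩ := ih2
    refine ⟨N₁ + N₂, m₁ * m₂, by rw [pow_add]; exact Ideal.mul_mem_mul hm₁ hm₂, ?_⟩
    rw [pow_add, map_mul]
    calc f X ^ N₁ * f X ^ N₂ * (z₁ * z₂) = (f X ^ N₁ * z₁) * (f X ^ N₂ * z₂) := by ring
      _ = f m₁ * f m₂ := by rw [he₁, he₂]


/-- `x ∈ I_t` (i.e. `x ^ b ∈ integral closure of I ^ a` where `t = a/b`) iff for every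
valuation `v` of `Frac(R)` over `R`, with values in an arbitrary linearly ordered abelian
group, there exists `y ∈ I` with `v x ≥ t · v y` (i.e. `b • v x ≥ a • v y`). -/
theorem stmt2 (R : Type) [CommRing R] [IsDomain R] [IsNoetherianRing R]
    (I : Ideal R) (a b : ℕ) (hb : b ≠ 0) (x : R) :
    x ^ b ∈ idealIntClosure (I ^ a) ↔
      ∀ (Γ : Type) [AddCommGroup Γ] [LinearOrder Γ] [IsOrderedAddMonoid Γ]
        (v : AddValuation (FractionRing R) (WithTop Γ)),
        (∀ r : R, 0 ≤ v (algebraMap R (FractionRing R) r)) →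
        ∃ y ∈ I, a • v (algebraMap R (FractionRing R) y)
          ≤ b • v (algebraMap R (FractionRing R) x) := by
  classical
  set K := FractionRing R with hK
  set f := algebraMap R K with hf_def
  constructor
  · rintro ⟨n, hn, c, hc, heq⟩ Γ _ _ _ v hv
    by_cases ha : a = 0
    · refine ⟨0, I.zero_mem, ?_⟩
      rw [ha, zero_nsmul]
      exact nsmul_nonneg (hv x) b
    set α := v (f x) with hα_def
    by_cases hα : α = ⊤
    · refine ⟨0, I.zero_mem, ?_⟩
      have hbα : b • α = ⊤ := by rw [hα]; exact aux_nsmul_top hb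
      rw [hbα]
      exact le_top
    obtain ⟨y₀, hy₀I, hy₀min⟩ := aux_min v hv I
    refine ⟨y₀, hy₀I, ?_⟩
    set β := v (f y₀) with hβ_def
    have hcb : ∀ i, 1 ≤ i → i ≤ n → (a * i) • β ≤ v (f (c i)) := by
      intro i h1 h2
      have hmem : c i ∈ I ^ (a * i) := by
        have := hc i h1 h2
        rwa [← pow_mul] at this
      exact aux_pow_mem v hv hy₀min (a * i) _ hmem
    have hXn : v (f ((x ^ b) ^ n)) = (b * n) • α := by
      rw [← pow_mul, map_pow, AddValuation.map_pow, mul_comm]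
    have hnetop : ∀ m : ℕ, m • α ≠ ⊤ := by
      intro m
      obtain ⟨γ, hγ⟩ := WithTop.ne_top_iff_exists.mp hα
      rw [← hγ, ← WithTop.coe_nsmul]
      exact WithTop.coe_ne_top
    have key : ∃ i ∈ Finset.Icc 1 n, (a * i) • β + (b * (n - i)) • α ≤ (b * n) • α := by
      by_contra hcon
      push_neg at hcon
      have hlt : (b * n) • α < v (f ((x ^ b) ^ n)) := by
        have heq' : (x ^ b) ^ n = -(∑ i ∈ Finset.Icc 1 n, c i * (x ^ b) ^ (n - i)) :=
          eq_neg_of_add_eq_zero_left heq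
        rw [heq', map_neg, AddValuation.map_neg, map_sum]
        refine v.map_lt_sum (hnetop (b * n)) ?_
        intro i hi
        obtain ⟨h1, h2⟩ := Finset.mem_Icc.mp hi
        have e1 : v (f (c i * (x ^ b) ^ (n - i))) = v (f (c i)) + (b * (n - i)) • α := by
          rw [map_mul, AddValuation.map_mul, ← pow_mul, map_pow, AddValuation.map_pow]
        rw [e1]
        calc (b * n) • α < (a * i) • β + (b * (n - i)) • α := hcon i hi
          _ ≤ v (f (c i)) + (b * (n - i)) • α := add_le_add_left (hcb i h1 h2) _
      rw [hXn] at hlt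
      exact lt_irrefl _ hlt
    obtain ⟨i, hi, hkey⟩ := key
    obtain ⟨h1, h2⟩ := Finset.mem_Icc.mp hi
    have e2 : (b * n) • α = (b * i) • α + (b * (n - i)) • α := by
      rw [← add_nsmul]
      congr 1
      rw [← Nat.mul_add, Nat.add_sub_cancel' h2]
    rw [e2] at hkey
    have hkey2 : (a * i) • β ≤ (b * i) • α :=
      (WithTop.add_le_add_iff_right (hnetop (b * (n - i)))).mp hkey
    rw [mul_nsmul, mul_nsmul] at hkey2
    exact aux_nsmul_cancel (by omega : i ≠ 0) hkey2
  · intro h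
    by_contra hcl
    have hx0 : x ≠ 0 := by
      rintro rfl
      exact hcl ⟨1, one_pos, 0, fun i _ _ => zero_mem _, by simp [zero_pow hb]⟩
    have ha : a ≠ 0 := by
      rintro rfl
      refine hcl ⟨1, one_pos, fun _ => -(x ^ b), fun i _ _ => by simp [Ideal.top_pow], by simp⟩
    set J := I ^ a with hJ
    set X := x ^ b with hX
    have hXne : X ≠ 0 := pow_ne_zero b hx0
    have hfInj : Function.Injective f := IsFractionRing.injective R K
    have hfX : f X ≠ 0 := fun hh => hXne (hfInj (by rw [hh, map_zero]))
    set T : Set K := {w : K | ∃ j ∈ J, w = f j / f X} with hT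
    set A : Subalgebra R K := Algebra.adjoin R T with hA
    set A' : Subring K := A.toSubring with hA'
    set s : Set A' := {z : A' | (z : K) ∈ T} with hs
    have hone : (1 : A') ∉ Ideal.span s := by
      intro h1
      obtain ⟨μ, hsupp, hsum⟩ := Submodule.mem_span_set.mp h1
      have hjex : ∀ z ∈ μ.support, ∃ j ∈ J, (z : K) = f j / f X := fun z hz => hsupp hz
      choose! jf hjf hjeq using hjex
      have hclear : ∀ z ∈ μ.support, ∃ (N : ℕ) (m : R), m ∈ (J ⊔ Ideal.span {X}) ^ N ∧
          f X ^ N * ((μ z : A') : K) = f m := by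
        intro z _
        exact aux_clear J X hfX (Subalgebra.mem_toSubring.mp (μ z).2)
      choose! Nf mf hmf hef using hclear
      set N₀ := μ.support.sup Nf with hN₀
      have hsum' : ∑ z ∈ μ.support, ((μ z : K) * (z : K)) = 1 := by
        have h2 : (∑ z ∈ μ.support, μ z * z : A') = 1 := by
          rw [← hsum]; rfl
        calc ∑ z ∈ μ.support, ((μ z : K) * (z : K))
            = ((∑ z ∈ μ.support, μ z * z : A') : K) := by push_cast; rfl
          _ = 1 := by rw [h2]; rfl
      have hterm : ∀ z ∈ μ.support, f X ^ (N₀ + 1) * ((μ z : K) * (z : K))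
          = f (jf z * (X ^ (N₀ - Nf z) * mf z)) := by
        intro z hz
        have hNz : Nf z ≤ N₀ := Finset.le_sup hz
        have e : (N₀ + 1) = 1 + ((N₀ - Nf z) + Nf z) := by omega
        rw [map_mul, map_mul, map_pow, ← hef z hz, hjeq z hz, e, pow_add, pow_add, pow_one]
        rw [div_eq_mul_inv]
        rw [hX] at hfX ⊢
        simp only [map_pow] at hfX ⊢
        have hinv := mul_inv_cancel₀ hfX
        linear_combination (f (jf z) * (f x ^ b) ^ (N₀ - Nf z) * (f x ^ b) ^ Nf z * (μ z : K)) * hinv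
      have hsumeq : X ^ (N₀ + 1) = ∑ z ∈ μ.support, jf z * (X ^ (N₀ - Nf z) * mf z) := by
        apply hfInj
        rw [map_pow, map_sum]
        calc f X ^ (N₀ + 1) = f X ^ (N₀ + 1) * ∑ z ∈ μ.support, ((μ z : K) * (z : K)) := by
              rw [hsum', mul_one]
          _ = ∑ z ∈ μ.support, f X ^ (N₀ + 1) * ((μ z : K) * (z : K)) := by
              rw [Finset.mul_sum]
          _ = _ := Finset.sum_congr rfl hterm
      have hkey : X ^ (N₀ + 1) ∈ J * (J ⊔ Ideal.span {X}) ^ N₀ := by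
        rw [hsumeq]
        refine Ideal.sum_mem _ fun z hz => ?_
        have hNz : Nf z ≤ N₀ := Finset.le_sup hz
        have hmm : X ^ (N₀ - Nf z) * mf z ∈ (J ⊔ Ideal.span {X}) ^ N₀ := by
          have := aux_bump J X (N₀ - Nf z) (Nf z) (hmf z hz)
          rwa [Nat.sub_add_cancel hNz] at this
        exact Ideal.mul_mem_mul (hjf z hz) hmm
      exact hcl (aux_mem_closure_of_pow J X N₀ hkey)
    obtain ⟨𝔪, hmax, hsub⟩ := Ideal.exists_le_maximal (Ideal.span s)
      ((Ideal.ne_top_iff_one _).mpr hone)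
    haveI := hmax.isPrime
    obtain ⟨hBle, hlocal⟩ := (LocalSubring.ofPrime A' 𝔪).exists_le_valuationSubring.choose_spec
    set B := (LocalSubring.ofPrime A' 𝔪).exists_le_valuationSubring.choose with hB
    have hRB : ∀ r : R, f r ∈ B := fun r =>
      hBle (LocalSubring.le_ofPrime A' 𝔪 (Subalgebra.mem_toSubring.mpr (A.algebraMap_mem r)))
    have hjlt : ∀ j ∈ J, B.valuation (f j) < B.valuation (f X) := by
      intro j hj
      have hTj : (f j / f X) ∈ T := ⟨j, hj, rfl⟩
      have hjA : f j / f X ∈ A' := Subalgebra.mem_toSubring.mpr (Algebra.subset_adjoin hTj)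
      set z : A' := ⟨f j / f X, hjA⟩ with hz_def
      have hz𝔪 : z ∈ 𝔪 := hsub (Ideal.subset_span (by exact hTj))
      have hnonunit : ¬ IsUnit (algebraMap A' (LocalSubring.ofPrime A' 𝔪).toSubring z) := by
        rw [IsLocalization.AtPrime.isUnit_to_map_iff
          ((LocalSubring.ofPrime A' 𝔪).toSubring) 𝔪 z]
        exact fun hcompl => hcompl hz𝔪
      have hζB : f j / f X ∈ B :=
        hBle (LocalSubring.le_ofPrime A' 𝔪 hjA)
      set ζ : B := ⟨f j / f X, hζB⟩ with hζ_def
      have hζnon : ¬ IsUnit ζ := by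
        intro hu
        apply hnonunit
        exact hlocal.map_nonunit _ hu
      have hlt1 : B.valuation (f j / f X) < 1 :=
        (B.valuation_lt_one_iff ζ).mp ((IsLocalRing.mem_maximalIdeal ζ).mpr hζnon)
      have hvfX : B.valuation (f X) ≠ 0 := by
        rw [Valuation.ne_zero_iff]
        exact hfX
      have hfj : f j = (f j / f X) * f X := (div_mul_cancel₀ _ hfX).symm
      rw [hfj, Valuation.map_mul, mul_comm]
      have hfin := mul_lt_mul_of_pos_left hlt1 (zero_lt_iff.mpr hvfX)
      rwa [mul_one] at hfin
    obtain ⟨y, hyI, hyle⟩ := h (auxGamma B) (auxAddVal B) (fun r => by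
      rw [auxAddVal_apply, ← auxG_one]
      exact (auxG_le_iff B _ _).mpr (B.valuation_le_one ⟨f r, hRB r⟩))
    have hstrict : b • auxAddVal B (f x) < a • auxAddVal B (f y) := by
      have h1 : B.valuation (f (y ^ a)) < B.valuation (f (x ^ b)) :=
        hjlt (y ^ a) (Ideal.pow_mem_pow hyI a)
      have h2 := (auxG_lt_iff B _ _).mpr h1
      simp only [map_pow, Valuation.map_pow] at h2
      rw [auxG_pow B _ hb, auxG_pow B _ ha] at h2
      rw [auxAddVal_apply, auxAddVal_apply]
      exact h2
    exact absurd hyle (not_le.mpr hstrict)
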